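/- Let z = cos φ · e^{iφ} with 0 < φ < π/2, and let n > 1 be real with nφ ≤ 2π - φ. Then |z^n - 1| > |z - 1|, where z^n = (cos φ)^n · e^{inφ}. -/

import Mathlib

open Real Complex

lemma abs_sq_aux (a θ : ℝ) : ‖(a:ℂ) * Complex.exp (θ * Complex.I) - 1‖ ^ 2
    = a^2 - 2*a*Real.cos θ + 1 := by
  rw [Complex.sq_norm, Complex.normSq_apply]
  simp [Complex.exp_mul_I, Complex.cos_ofReal_re, Complex.sin_ofReal_re]
  nlinarith [Real.sin_sq_add_cos_sq θ]

theorem stmt10 (φ n : ℝ) (h1 : 0 < φ) (h2 : φ < π / 2) (hn : 1 < n)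
    (hnφ : n * φ ≤ 2 * π - φ) :
    ‖(Real.cos φ : ℂ) * Complex.exp (φ * Complex.I) - 1‖ <
      ‖((Real.cos φ) ^ n : ℝ) * Complex.exp (n * φ * Complex.I) - 1‖ := by
  set r := Real.cos φ with hr
  have hr0 : 0 < r := Real.cos_pos_of_mem_Ioo ⟨by linarith [Real.pi_pos], h2⟩
  have hr1 : r < 1 := by
    have := Real.cos_lt_cos_of_nonneg_of_le_pi (le_refl 0) (by linarith [Real.pi_pos] : φ ≤ π) h1
    simpa [hr] using this
  set s := r ^ n with hs
  have hs0 : 0 < s := Real.rpow_pos_of_pos hr0 n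
  have hsr : s < r := by
    have := Real.rpow_lt_rpow_of_exponent_gt hr0 hr1 hn
    simpa [Real.rpow_one] using this
  have hcos : Real.cos (n * φ) ≤ r := by
    rcases le_or_gt (n * φ) π with hle | hgt
    · exact Real.cos_le_cos_of_nonneg_of_le_pi h1.le hle (by nlinarith)
    · have : Real.cos (n * φ) = Real.cos (2 * π - n * φ) := by
        rw [Real.cos_sub, Real.cos_two_pi, Real.sin_two_pi]; ring_nf
      rw [this]
      exact Real.cos_le_cos_of_nonneg_of_le_pi (by linarith) (by linarith) (by linarith)
  apply lt_of_pow_lt_pow_left₀ 2 (norm_nonneg _)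
  have hcast : ((n:ℂ) * (φ:ℂ)) = (((n*φ : ℝ)):ℂ) := by push_cast; ring
  rw [hcast, abs_sq_aux, abs_sq_aux]
  have hsin : Real.cos φ ^ 2 - 2 * Real.cos φ * Real.cos φ + 1 = 1 - r^2 := by
    rw [← hr]; ring
  rw [hsin]
  nlinarith [sq_nonneg (s - r), mul_le_mul_of_nonneg_left hcos hs0.le]
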